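/- Let π₁, ..., π_n be strict linear orders on a finite set M of items, let M' ⊆ M, and let (A₁, ..., A_n) be an allocation of M' that is SD-EF with respect to (π₁, ..., π_n) (restricted to M'). Suppose that for every agent i, every item of M \ M' is strictly less preferred under π_i than every item of A_i. Let (B₁, ..., B_n) be an allocation of M such that A_i ⊆ B_i and |B_i \ A_i| ≤ 1 for every agent i. Then (B₁, ..., B_n) is SD-EFX with respect to (π₁, ..., π_n). -/

import Mathlib

def nthv (s : Finset ℕ) (k : ℕ) : ℕ := (Finset.sort s (· ≤ ·)).getD k 0

lemma nthv_mem {s : Finset ℕ} {k : ℕ} (hk : k < s.card) : nthv s k ∈ s := by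
  have hl : k < (Finset.sort s (· ≤ ·)).length := by rwa [Finset.length_sort]
  rw [nthv, List.getD_eq_getElem _ _ hl]
  exact (Finset.mem_sort _).1 (List.getElem_mem _)

lemma filter_lt_nthv_card_le {s : Finset ℕ} {k : ℕ} (hk : k < s.card) :
    (s.filter (· < nthv s k)).card ≤ k := by
  have hl : k < (Finset.sort s (· ≤ ·)).length := by rwa [Finset.length_sort]
  set L := Finset.sort s (· ≤ ·) with hL
  have hsub : s.filter (· < nthv s k) ⊆ (L.take k).toFinset := by
    intro x hx
    rw [Finset.mem_filter] at hx
    obtain ⟨hxs, hxlt⟩ := hx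
    have hxL : x ∈ L := (Finset.mem_sort _).2 hxs
    obtain ⟨i, hi, rfl⟩ := List.getElem_of_mem hxL
    have hnth : nthv s k = L[k] := by rw [nthv, ← hL, List.getD_eq_getElem _ _ hl]
    rw [hnth] at hxlt
    have hik : i < k := by
      by_contra h
      push_neg at h
      rcases lt_or_eq_of_le h with h' | h'
      · have := (Finset.sortedLT_sort s).strictMono_get
          (a := ⟨k, hl⟩) (b := ⟨i, hi⟩) (by simpa using h')
        simp only [List.get_eq_getElem, ← hL] at this
        omega
      · subst h'; omega
    rw [List.mem_toFinset]
    rw [List.mem_iff_getElem]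
    exact ⟨i, by simp [List.length_take]; omega, by simp [List.getElem_take]⟩
  calc (s.filter (· < nthv s k)).card ≤ (L.take k).toFinset.card := Finset.card_le_card hsub
    _ ≤ (L.take k).length := (L.take k).toFinset_card_le
    _ ≤ k := by simp [List.length_take]

lemma take_toFinset_card {s : Finset ℕ} {k : ℕ} (hk : k < s.card) :
    ((Finset.sort s (· ≤ ·)).take (k+1)).toFinset.card = k + 1 := by
  have hl : k + 1 ≤ (Finset.sort s (· ≤ ·)).length := by
    rw [Finset.length_sort]; omega
  rw [List.toFinset_card_of_nodup ((Finset.sort_nodup s _).sublist (List.take_sublist _ _))]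
  simp [List.length_take]; omega

lemma take_subset_filter_le {s : Finset ℕ} {k : ℕ} (hk : k < s.card) :
    ((Finset.sort s (· ≤ ·)).take (k+1)).toFinset ⊆ s.filter (· ≤ nthv s k) := by
  have hl : k < (Finset.sort s (· ≤ ·)).length := by rwa [Finset.length_sort]
  intro x hx
  rw [List.mem_toFinset, List.mem_iff_getElem] at hx
  obtain ⟨i, hi, rfl⟩ := hx
  have hi' : i < (Finset.sort s (· ≤ ·)).length := by
    simp [List.length_take] at hi; omega
  have hik : i ≤ k := by simp [List.length_take] at hi; omega
  have hget : ((Finset.sort s (· ≤ ·)).take (k+1))[i] = (Finset.sort s (· ≤ ·))[i] :=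
    List.getElem_take
  rw [Finset.mem_filter, hget]
  constructor
  · exact (Finset.mem_sort _).1 (List.getElem_mem _)
  · show (Finset.sort s (· ≤ ·))[i] ≤ nthv s k
    rw [nthv, List.getD_eq_getElem _ _ hl]
    rcases lt_or_eq_of_le hik with h' | h'
    · have := (Finset.sortedLT_sort s).strictMono_get
        (a := ⟨i, hi'⟩) (b := ⟨k, hl⟩) (by simpa using h')
      simp only [List.get_eq_getElem] at this
      omega
    · subst h'; exact le_refl _

lemma filter_le_nthv_card {s : Finset ℕ} {k : ℕ} (hk : k < s.card) :
    k + 1 ≤ (s.filter (· ≤ nthv s k)).card := by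
  calc k + 1 = ((Finset.sort s (· ≤ ·)).take (k+1)).toFinset.card := (take_toFinset_card hk).symm
    _ ≤ _ := Finset.card_le_card (take_subset_filter_le hk)

lemma nthv_le_of_filter {s : Finset ℕ} {k v : ℕ} (hk : k < s.card)
    (h : k + 1 ≤ (s.filter (· ≤ v)).card) : nthv s k ≤ v := by
  by_contra hlt
  push_neg at hlt
  have hsub : s.filter (· ≤ v) ⊆ s.filter (· < nthv s k) := by
    intro x hx
    rw [Finset.mem_filter] at hx ⊢
    exact ⟨hx.1, lt_of_le_of_lt hx.2 hlt⟩
  have := Finset.card_le_card hsub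
  have := filter_lt_nthv_card_le hk
  omega

lemma le_nthv_of_filter {s : Finset ℕ} {k v : ℕ} (hk : k < s.card)
    (h : (s.filter (· < v)).card ≤ k) : v ≤ nthv s k := by
  by_contra hlt
  push_neg at hlt
  have hsub : s.filter (· ≤ nthv s k) ⊆ s.filter (· < v) := by
    intro x hx
    rw [Finset.mem_filter] at hx ⊢
    exact ⟨hx.1, lt_of_le_of_lt hx.2 hlt⟩
  have h1 := Finset.card_le_card hsub
  have h2 := filter_le_nthv_card hk
  omega

lemma nthv_le_of_subset {s t : Finset ℕ} {k : ℕ} (hts : t ⊆ s) (hk : k < t.card) :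
    nthv s k ≤ nthv t k := by
  have hks : k < s.card := lt_of_lt_of_le hk (Finset.card_le_card hts)
  apply nthv_le_of_filter hks
  calc k + 1 ≤ (t.filter (· ≤ nthv t k)).card := filter_le_nthv_card hk
    _ ≤ (s.filter (· ≤ nthv t k)).card :=
      Finset.card_le_card (Finset.filter_subset_filter _ hts)

lemma nthv_eq_of_above {s t : Finset ℕ} {k : ℕ} (hts : t ⊆ s)
    (habove : ∀ x ∈ s, x ∉ t → ∀ y ∈ t, y < x) (hk : k < t.card) :
    nthv s k = nthv t k := by
  have hks : k < s.card := lt_of_lt_of_le hk (Finset.card_le_card hts)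
  refine le_antisymm (nthv_le_of_subset hts hk) ?_
  apply le_nthv_of_filter hks
  have hsub : s.filter (· < nthv t k) ⊆ t.filter (· < nthv t k) := by
    intro x hx
    rw [Finset.mem_filter] at hx ⊢
    refine ⟨?_, hx.2⟩
    by_contra hxt
    have := habove x hx.1 hxt (nthv t k) (nthv_mem hk)
    omega
  calc (s.filter (· < nthv t k)).card ≤ (t.filter (· < nthv t k)).card :=
      Finset.card_le_card hsub
    _ ≤ k := filter_lt_nthv_card_le hk


/-- An order on items is encoded as a ranking bijection `π : M ≃ Fin m`, where smaller rank
means more preferred.  `sdDom π A B` says `A` sd-dominates `B` with respect to `π`. -/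
def sdDom {M : Type*} [DecidableEq M] {m : ℕ} (π : M ≃ Fin m) (A B : Finset M) : Prop :=
  B.card ≤ A.card ∧ ∀ k < B.card,
    (Finset.sort (A.image fun a => ((π a : Fin m) : ℕ)) (· ≤ ·)).getD k 0 ≤
    (Finset.sort (B.image fun b => ((π b : Fin m) : ℕ)) (· ≤ ·)).getD k 0

/-- `A` is an allocation of the set `S` of items among `n` agents. -/
def IsAllocation {M : Type*} [DecidableEq M] {n : ℕ} (A : Fin n → Finset M) (S : Finset M) :
    Prop :=
  (∀ i j : Fin n, i ≠ j → Disjoint (A i) (A j)) ∧ Finset.univ.biUnion A = S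

/-- The allocation `A` is SD-envy-free with respect to the profile of orders `π`. -/
def SDEF {M : Type*} [DecidableEq M] {n m : ℕ} (π : Fin n → (M ≃ Fin m))
    (A : Fin n → Finset M) : Prop :=
  ∀ i j : Fin n, sdDom (π i) (A i) (A j)

/-- The allocation `A` is SD-envy-free up to any item with respect to the orders `π`. -/
def SDEFX {M : Type*} [DecidableEq M] {n m : ℕ} (π : Fin n → (M ≃ Fin m))
    (A : Fin n → Finset M) : Prop :=
  ∀ i j : Fin n, (A j).Nonempty → ∀ g ∈ A j, sdDom (π i) (A i) ((A j).erase g)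

/-- If `(A₁, …, Aₙ)` is an SD-EF allocation of `M' ⊆ M`, every item outside `M'`
is strictly less preferred by each agent `i` than every item of `A_i` (strictly less preferred
means strictly larger rank), and `(B₁, …, Bₙ)` is an allocation of `M` with `A_i ⊆ B_i` and
`|B_i \ A_i| ≤ 1` for every `i`, then `(B₁, …, Bₙ)` is SD-EFX. -/
theorem sdefx_of_sdef_extension {M : Type*} [Fintype M] [DecidableEq M] (n m : ℕ)
    (π : Fin n → (M ≃ Fin m)) (M' : Finset M)
    (A : Fin n → Finset M) (hA : IsAllocation A M') (hef : SDEF π A)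
    (hworse : ∀ i : Fin n, ∀ g ∈ M'ᶜ, ∀ a ∈ A i, π i a < π i g)
    (B : Fin n → Finset M) (hB : IsAllocation B Finset.univ)
    (hsub : ∀ i : Fin n, A i ⊆ B i) (hone : ∀ i : Fin n, (B i \ A i).card ≤ 1) :
    SDEFX π B := by
  have hout : ∀ i : Fin n, B i \ A i ⊆ M'ᶜ := by
    intro i x hx
    rw [Finset.mem_sdiff] at hx
    rw [Finset.mem_compl]
    intro hxM'
    rw [← hA.2, Finset.mem_biUnion] at hxM'
    obtain ⟨j, -, hxAj⟩ := hxM'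
    have hij : i ≠ j := fun h => hx.2 (h ▸ hxAj)
    exact (Finset.disjoint_left.1 (hB.1 i j hij)) hx.1 (hsub j hxAj)
  intro i j hne g hg
  set r : M → ℕ := fun a => ((π i a : Fin m) : ℕ) with hr
  have hrinj : Function.Injective r := fun a b h => (π i).injective (Fin.val_injective h)
  set C := (B j).erase g with hC
  have hCcard : C.card = (B j).card - 1 := Finset.card_erase_of_mem hg
  have hBjcard : (B j).card ≤ (A j).card + 1 := by
    have h1 := Finset.card_sdiff_add_card_eq_card (hsub j)
    have h2 := hone j
    omega
  have hCAj : C.card ≤ (A j).card := by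
    have : 1 ≤ (B j).card := Finset.card_pos.2 ⟨g, hg⟩
    omega
  have habj : (A j).card ≤ (A i).card := (hef i j).1
  have haiBi : (A i).card ≤ (B i).card := Finset.card_le_card (hsub i)
  constructor
  · omega
  intro k hk
  have hkb : k < (A j).card := lt_of_lt_of_le hk hCAj
  have hka : k < (A i).card := lt_of_lt_of_le hkb habj
  have cim : ∀ S : Finset M, (S.image r).card = S.card :=
    fun S => Finset.card_image_of_injective S hrinj
  have hkC : k < (C.image r).card := by rw [cim]; exact hk
  have hkAi' : k < ((A i).image r).card := by rw [cim]; exact hka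
  have hkAj' : k < ((A j).image r).card := by rw [cim]; exact hkb
  have step1 : nthv ((B i).image r) k = nthv ((A i).image r) k := by
    apply nthv_eq_of_above (Finset.image_subset_image (hsub i)) ?_ hkAi'
    intro x hx hxA y hy
    rw [Finset.mem_image] at hx hy
    obtain ⟨c, hc, rfl⟩ := hx
    obtain ⟨a, ha, rfl⟩ := hy
    have hcA : c ∉ A i := fun h => hxA (Finset.mem_image_of_mem r h)
    have hcout : c ∈ M'ᶜ := hout i (Finset.mem_sdiff.2 ⟨hc, hcA⟩)
    have h3 := hworse i c hcout a ha
    rw [Fin.lt_def] at h3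
    exact h3
  obtain ⟨a₀, ha₀, hva⟩ := Finset.mem_image.1 (nthv_mem hkAi')
  have step2 : nthv ((A i).image r) k ≤ nthv (C.image r) k := by
    apply le_nthv_of_filter hkC
    have hsubf : (C.image r).filter (· < nthv ((A i).image r) k) ⊆
        ((A j).image r).filter (· < nthv ((A i).image r) k) := by
      intro x hx
      rw [Finset.mem_filter, Finset.mem_image] at hx
      obtain ⟨⟨c, hcC, rfl⟩, hxlt⟩ := hx
      have hcBj : c ∈ B j := Finset.mem_of_mem_erase hcC
      rw [Finset.mem_filter, Finset.mem_image]
      refine ⟨⟨c, ?_, rfl⟩, hxlt⟩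
      by_contra hcAj
      have hcout : c ∈ M'ᶜ := hout j (Finset.mem_sdiff.2 ⟨hcBj, hcAj⟩)
      have h3 := hworse i c hcout a₀ ha₀
      rw [Fin.lt_def] at h3
      have h4 : r a₀ < r c := h3
      omega
    have hmono : ((A j).image r).filter (· < nthv ((A i).image r) k) ⊆
        ((A j).image r).filter (· < nthv ((A j).image r) k) := by
      intro x hx
      rw [Finset.mem_filter] at hx ⊢
      exact ⟨hx.1, lt_of_lt_of_le hx.2 ((hef i j).2 k hkb)⟩
    calc ((C.image r).filter (· < nthv ((A i).image r) k)).card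
        ≤ (((A j).image r).filter (· < nthv ((A j).image r) k)).card :=
          Finset.card_le_card (hsubf.trans hmono)
      _ ≤ k := filter_lt_nthv_card_le hkAj'
  have : nthv ((B i).image r) k ≤ nthv (C.image r) k := step1 ▸ step2
  exact this
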